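/- For every real polynomial map f : ℝⁿ → ℝⁿ whose components have total degree at most d, there exist matrices/parameters of a one-hidden-layer network with h = max(0, n·(C(n+d,d) − n − 1)) multiplicative hidden nodes, linear output layer, and direct input-output linear connections plus biases, such that the network function equals f exactly on all of ℝⁿ. -/

import Mathlib

open MvPolynomial Finset

/-- Every polynomial map `f : ℝⁿ → ℝⁿ` of total degree at most `d` is exactly
represented by a one-hidden-layer PolyNet with `h = n * (C(n+d,d) - n - 1)`
multiplicative hidden nodes, a linear output layer, direct input-output linear
connections, and biases. -/
theorem polynet_exact_representation (n d : ℕ)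
    (f : (Fin n → ℝ) → (Fin n → ℝ))
    (p : Fin n → MvPolynomial (Fin n) ℝ)
    (hdeg : ∀ i, (p i).totalDegree ≤ d)
    (hf : ∀ x i, f x i = MvPolynomial.eval x (p i)) :
    ∃ (a0 : Fin n → ℝ)                                 -- output biases
      (a1 : Fin n → Fin n → ℝ)                          -- direct input-output weights
      (w : Fin n → Fin (n * ((n + d).choose d - n - 1)) → ℝ)  -- hidden-output weights
      (E : Fin (n * ((n + d).choose d - n - 1)) → Fin n → ℕ), -- hidden-node exponents
      (∀ l, ∑ k, E l k ≤ d) ∧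
      ∀ x i, f x i = a0 i + ∑ k, a1 i k * x k
        + ∑ l, w i l * ∏ k, x k ^ E l k := by
  classical
  set h := n * ((n + d).choose d - n - 1) with hh
  set Triv : Finset (Fin n →₀ ℕ) :=
    insert 0 (Finset.image (fun k => Finsupp.single k 1) Finset.univ) with hTriv
  set T : Finset (Fin n →₀ ℕ) := Finset.univ.biUnion (fun i => (p i).support) with hT
  set T0 : Finset (Fin n →₀ ℕ) := T \ Triv with hT0def
  have hTdeg : ∀ m ∈ T, (∑ k, m k) ≤ d := by
    intro m hm
    rcases Finset.mem_biUnion.1 hm with ⟨i, -, hi⟩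
    have h1 : m.sum (fun _ e => e) ≤ (p i).totalDegree := MvPolynomial.le_totalDegree hi
    have h2 : m.sum (fun _ e => e) = ∑ k, m k := Finsupp.sum_fintype _ _ (fun _ => rfl)
    rw [h2] at h1
    exact h1.trans (hdeg i)
  -- cardinality bound
  have hcard : T0.card ≤ h := by
    rcases Finset.eq_empty_or_nonempty T0 with he | ⟨m0, hm0⟩
    · simp [he]
    · have hm0T : m0 ∈ T := (Finset.mem_sdiff.1 hm0).1
      have hm0Triv : m0 ∉ Triv := (Finset.mem_sdiff.1 hm0).2
      have hm0ne : m0 ≠ 0 := by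
        intro h'
        exact hm0Triv (by simp [hTriv, h'])
      obtain ⟨k0, hk0⟩ : ∃ k, m0 k ≠ 0 := by
        by_contra hc; push_neg at hc
        exact hm0ne (Finsupp.ext fun k => hc k)
      have hn : 0 < n := k0.pos
      have hd : 1 ≤ d := by
        have h1 : m0 k0 ≤ ∑ k, m0 k :=
          Finset.single_le_sum (fun k _ => Nat.zero_le _) (Finset.mem_univ k0)
        have h2 := hTdeg m0 hm0T
        omega
      -- inject T0 into Sym (Fin (n+1)) d minus the n+1 "trivial" symbols
      set g : (Fin n →₀ ℕ) → Multiset (Fin (n + 1)) :=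
        fun m => (Finsupp.toMultiset m).map Fin.succ
          + (d - ∑ k, m k) • ({0} : Multiset (Fin (n + 1))) with hg
      have hgcount : ∀ m k, Multiset.count (Fin.succ k) (g m) = m k := by
        intro m k
        simp [hg, Multiset.count_map_eq_count' _ _ (Fin.succ_injective n),
          Multiset.count_singleton, (Fin.succ_ne_zero k), Finsupp.count_toMultiset]
      have hgcard : ∀ m ∈ T, Multiset.card (g m) = d := by
        intro m hm
        have h1 : Multiset.card (Finsupp.toMultiset m) = ∑ k, m k := by
          rw [Finsupp.card_toMultiset]
          exact Finsupp.sum_fintype _ _ (fun _ => rfl)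
        have := hTdeg m hm
        simp [hg, h1]
        omega
      set G : (Fin n →₀ ℕ) → Sym (Fin (n + 1)) d := fun m =>
        if hm : Multiset.card (g m) = d then Sym.mk (g m) hm
        else Sym.mk (Multiset.replicate d 0) (Multiset.card_replicate _ _) with hG
      have hGT : ∀ m ∈ T, (G m : Multiset (Fin (n + 1))) = g m := by
        intro m hm
        simp only [hG]
        split_ifs with h0
        · rfl
        · exact absurd (hgcard m hm) h0
      have hrep : Multiset.card (Multiset.replicate d (0 : Fin (n + 1))) = d :=
        Multiset.card_replicate _ _
      have hcons : ∀ k : Fin n,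
          Multiset.card (Fin.succ k ::ₘ Multiset.replicate (d - 1) (0 : Fin (n + 1))) = d := by
        intro k
        simp [Multiset.card_replicate]
        omega
      set S : Finset (Sym (Fin (n + 1)) d) :=
        insert (Sym.mk (Multiset.replicate d 0) hrep)
          (Finset.image (fun k : Fin n =>
            (Sym.mk (Fin.succ k ::ₘ Multiset.replicate (d - 1) 0) (hcons k) : Sym (Fin (n + 1)) d))
            Finset.univ) with hS
      have hScard : S.card = n + 1 := by
        rw [hS, Finset.card_insert_of_notMem, Finset.card_image_of_injective _ ?_]
        · simp
        · intro a b hab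
          by_contra hne
          have hcnt := congrArg (fun s : Sym (Fin (n + 1)) d =>
            Multiset.count (Fin.succ a) (s : Multiset (Fin (n + 1)))) hab
          have hz : ¬ ((0 : Fin (n + 1)) = Fin.succ a) := Ne.symm (Fin.succ_ne_zero a)
          have hz2 : ¬ (Fin.succ a = Fin.succ b) := fun h'' =>
            hne (Fin.succ_injective n h'')
          simp [Multiset.count_cons, Multiset.count_replicate, hz, hz2,
            Fin.succ_ne_zero a] at hcnt
        · intro hmem
          rcases Finset.mem_image.1 hmem with ⟨k, -, hk⟩
          have hcnt := congrArg (fun s : Sym (Fin (n + 1)) d =>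
            Multiset.count (Fin.succ k) (s : Multiset (Fin (n + 1)))) hk
          have hz : ¬ ((0 : Fin (n + 1)) = Fin.succ k) := Ne.symm (Fin.succ_ne_zero k)
          simp [Multiset.count_cons, Multiset.count_replicate, hz,
            Fin.succ_ne_zero k] at hcnt
      have hinj : Set.InjOn G T0 := by
        intro m1 hm1 m2 hm2 heq
        have h1 := hGT m1 (Finset.mem_sdiff.1 hm1).1
        have h2 := hGT m2 (Finset.mem_sdiff.1 hm2).1
        apply Finsupp.ext
        intro k
        rw [← hgcount m1 k, ← hgcount m2 k, ← h1, ← h2, heq]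
      have hmaps : ∀ m ∈ T0, G m ∈ Finset.univ \ S := by
        intro m hm
        have hmT : m ∈ T := (Finset.mem_sdiff.1 hm).1
        have hmTriv : m ∉ Triv := (Finset.mem_sdiff.1 hm).2
        rw [Finset.mem_sdiff]
        refine ⟨Finset.mem_univ _, ?_⟩
        intro hmem
        rw [hS, Finset.mem_insert] at hmem
        rcases hmem with h' | h'
        · -- G m is the all-zero symbol: m = 0
          have hg0 : g m = Multiset.replicate d 0 := by
            rw [← hGT m hmT, h']
            rfl
          have hm0 : m = 0 := by
            apply Finsupp.ext
            intro k
            have hc := hgcount m k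
            rw [hg0, Multiset.count_replicate,
              if_neg (Ne.symm (Fin.succ_ne_zero k))] at hc
            simp [Finsupp.zero_apply, ← hc]
          exact hmTriv (by simp [hTriv, hm0])
        · rcases Finset.mem_image.1 h' with ⟨k', -, hk'⟩
          have hg0 : g m = Fin.succ k' ::ₘ Multiset.replicate (d - 1) 0 := by
            rw [← hGT m hmT, ← hk']
            rfl
          have hm1 : m = Finsupp.single k' 1 := by
            apply Finsupp.ext
            intro k
            have hc := hgcount m k
            rw [hg0, Multiset.count_cons, Multiset.count_replicate,
              if_neg (Ne.symm (Fin.succ_ne_zero k))] at hc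
            rw [Finsupp.single_apply]
            by_cases hkk : k = k'
            · subst hkk
              simp only [if_pos rfl] at hc ⊢
              omega
            · have hne : ¬ (Fin.succ k = Fin.succ k') := fun h'' =>
                hkk (Fin.succ_injective n h'')
              rw [if_neg hne] at hc
              rw [if_neg (fun h'' => hkk h''.symm)]
              omega
          exact hmTriv (by
            rw [hTriv, Finset.mem_insert]
            exact Or.inr (Finset.mem_image.2 ⟨k', Finset.mem_univ k', hm1.symm⟩))
      have hle1 : T0.card ≤ (Finset.univ \ S : Finset (Sym (Fin (n + 1)) d)).card :=
        Finset.card_le_card_of_injOn G hmaps hinj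
      have hsym : Fintype.card (Sym (Fin (n + 1)) d) = (n + d).choose d := by
        rw [Sym.card_sym_eq_choose, Fintype.card_fin]
        congr 1
        omega
      have hle2 : (Finset.univ \ S : Finset (Sym (Fin (n + 1)) d)).card
          = (n + d).choose d - (n + 1) := by
        rw [Finset.card_sdiff_of_subset (Finset.subset_univ S), hScard, Finset.card_univ, hsym]
      have hfinal : (n + d).choose d - (n + 1) ≤ h := by
        rw [hh]
        have heq : (n + d).choose d - (n + 1) = (n + d).choose d - n - 1 := by omega
        rw [heq]
        exact Nat.le_mul_of_pos_left _ hn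
      omega
  -- obtain an embedding of T0 into the hidden nodes
  have hcard' : Fintype.card ↥T0 ≤ Fintype.card (Fin h) := by
    simpa [Fintype.card_coe] using hcard
  obtain ⟨ι⟩ := Function.Embedding.nonempty_of_card_le hcard'
  refine ⟨fun i => MvPolynomial.coeff 0 (p i),
    fun i k => MvPolynomial.coeff (Finsupp.single k 1) (p i),
    fun i l => if hl : ∃ m : ↥T0, ι m = l then
        MvPolynomial.coeff (↑hl.choose) (p i) else 0,
    fun l => if hl : ∃ m : ↥T0, ι m = l then ⇑(↑hl.choose : Fin n →₀ ℕ) else fun _ => 0,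
    ?_, ?_⟩
  · intro l
    by_cases hl : ∃ m : ↥T0, ι m = l
    · simp only [dif_pos hl]
      exact hTdeg _ (Finset.mem_sdiff.1 hl.choose.2).1
    · simp only [dif_neg hl]
      simp
  · intro x i
    -- hidden layer sum equals sum over T0
    have hhidden :
        (∑ l, (if hl : ∃ m : ↥T0, ι m = l then
            MvPolynomial.coeff (↑hl.choose) (p i) else 0)
          * ∏ k, x k ^ (if hl : ∃ m : ↥T0, ι m = l then
              ⇑(↑hl.choose : Fin n →₀ ℕ) else fun _ => 0) k)
          = ∑ m ∈ T0, MvPolynomial.coeff m (p i) * ∏ k, x k ^ m k := by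
      calc (∑ l, (if hl : ∃ m : ↥T0, ι m = l then
            MvPolynomial.coeff (↑hl.choose) (p i) else 0)
          * ∏ k, x k ^ (if hl : ∃ m : ↥T0, ι m = l then
              ⇑(↑hl.choose : Fin n →₀ ℕ) else fun _ => 0) k)
          = ∑ l ∈ Finset.image ι Finset.univ,
            (if hl : ∃ m : ↥T0, ι m = l then
              MvPolynomial.coeff (↑hl.choose) (p i) else 0)
            * ∏ k, x k ^ (if hl : ∃ m : ↥T0, ι m = l then
                ⇑(↑hl.choose : Fin n →₀ ℕ) else fun _ => 0) k := by
            refine (Finset.sum_subset (Finset.subset_univ _) ?_).symm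
            intro l _ hl
            rw [Finset.mem_image] at hl
            push_neg at hl
            have hne : ¬ ∃ m : ↥T0, ι m = l := by
              rintro ⟨m, rfl⟩
              exact hl m (Finset.mem_univ m) rfl
            rw [dif_neg hne, zero_mul]
        _ = ∑ m : ↥T0, (if hl : ∃ m' : ↥T0, ι m' = ι m then
              MvPolynomial.coeff (↑hl.choose) (p i) else 0)
            * ∏ k, x k ^ (if hl : ∃ m' : ↥T0, ι m' = ι m then
                ⇑(↑hl.choose : Fin n →₀ ℕ) else fun _ => 0) k :=
            Finset.sum_image (fun a _ b _ hab => ι.injective hab)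
        _ = ∑ m : ↥T0, MvPolynomial.coeff (↑m) (p i) * ∏ k, x k ^ (↑m : Fin n →₀ ℕ) k := by
            apply Finset.sum_congr rfl
            intro m _
            have hex : ∃ m' : ↥T0, ι m' = ι m := ⟨m, rfl⟩
            simp only [dif_pos hex]
            have hchoose : hex.choose = m := ι.injective hex.choose_spec
            rw [hchoose]
        _ = ∑ m ∈ T0, MvPolynomial.coeff m (p i) * ∏ k, x k ^ m k :=
            Finset.sum_coe_sort T0 (fun m => MvPolynomial.coeff m (p i) * ∏ k, x k ^ m k)
    rw [hhidden]
    -- polynomial as a sum over T ∪ Triv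
    have hsupp : (p i).support ⊆ T ∪ Triv := fun m hm =>
      Finset.mem_union_left _ (Finset.mem_biUnion.2 ⟨i, Finset.mem_univ i, hm⟩)
    have e1 : f x i = ∑ m ∈ T ∪ Triv, MvPolynomial.coeff m (p i) * ∏ k, x k ^ m k := by
      rw [hf, MvPolynomial.eval_eq']
      exact Finset.sum_subset hsupp
        (fun m _ hm => by rw [MvPolynomial.notMem_support_iff.1 hm, zero_mul])
    have hTrivsub : Triv ⊆ T ∪ Triv := Finset.subset_union_right
    have e2 : (∑ m ∈ (T ∪ Triv) \ Triv, MvPolynomial.coeff m (p i) * ∏ k, x k ^ m k)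
        + (∑ m ∈ Triv, MvPolynomial.coeff m (p i) * ∏ k, x k ^ m k)
        = ∑ m ∈ T ∪ Triv, MvPolynomial.coeff m (p i) * ∏ k, x k ^ m k :=
      Finset.sum_sdiff hTrivsub
    have e3 : (T ∪ Triv) \ Triv = T0 := by
      rw [hT0def, Finset.union_sdiff_right]
    have hnotmem : (0 : Fin n →₀ ℕ) ∉ Finset.image (fun k => Finsupp.single k 1)
        (Finset.univ : Finset (Fin n)) := by
      simp only [Finset.mem_image]
      rintro ⟨k, -, hk⟩
      exact one_ne_zero (Finsupp.single_eq_zero.1 hk)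
    have e4 : (∑ m ∈ Triv, MvPolynomial.coeff m (p i) * ∏ k, x k ^ m k)
        = MvPolynomial.coeff 0 (p i)
          + ∑ k, MvPolynomial.coeff (Finsupp.single k 1) (p i) * x k := by
      rw [hTriv, Finset.sum_insert hnotmem,
        Finset.sum_image (fun a _ b _ hab => Finsupp.single_left_injective one_ne_zero hab)]
      congr 1
      · simp
      · apply Finset.sum_congr rfl
        intro k _
        congr 1
        rw [Finset.prod_eq_single k]
        · rw [Finsupp.single_apply, if_pos rfl, pow_one]
        · intro j _ hj
          rw [Finsupp.single_apply, if_neg (Ne.symm hj), pow_zero]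
        · intro hk
          exact absurd (Finset.mem_univ k) hk
    rw [e1, ← e2, e3, e4]
    ring
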